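/- Let p be an odd prime and n even with 2 ≤ n ≤ p−3. Then G_n(p) ≡ p(p−1)·B_n·(1 + i^n) (mod p²) in ℤ[i] (working in ℤ_(p)[i] to interpret the Bernoulli number). In particular, if n ≡ 2 (mod 4) then G_n(p) ≡ 0 (mod p²), and if n ≡ 0 (mod 4) then G_n(p) ≡ 2p(p−1)·B_n (mod p²). -/

import Mathlib

noncomputable section

/-- `i` in the Gaussian integers. -/
def Ig : GaussianInt := ⟨0, 1⟩

/-- Classical power sum `S_r(N) = ∑_{t=1}^N t^r`. -/
def Sps (r N : ℕ) : ℤ := ∑ t ∈ Finset.Icc 1 N, (t : ℤ) ^ r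

/-- Gaussian power sum `F_n(k,m) = ∑_{a=1}^k ∑_{b=1}^m (a+bi)^n`. -/
def Fg (n k m : ℕ) : GaussianInt :=
  ∑ a ∈ Finset.Icc 1 k, ∑ b ∈ Finset.Icc 1 m, ((a : GaussianInt) + (b : GaussianInt) * Ig) ^ n

/-- Square Gaussian power sum `G_n(N) = F_n(N-1,N-1)`. -/
def Gg (n N : ℕ) : GaussianInt := Fg n (N - 1) (N - 1)

open Finset

lemma Ig_sq : Ig ^ 2 = -1 := by
  ext <;> simp [Ig, pow_two, Zsqrtd.re_mul, Zsqrtd.im_mul]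

lemma Ig_pow_even {m : ℕ} : Ig ^ (2 * m) = ((-1 : ℤ) ^ m : ℤ) := by
  rw [pow_mul, Ig_sq]
  push_cast
  ring

lemma norm_nat_eq_one (p : ℕ) [Fact p.Prime] {k : ℕ} (h : ¬ (p : ℤ) ∣ (k : ℤ)) :
    ‖(k : ℚ_[p])‖ = 1 := by
  have h1 : ‖((k : ℤ) : ℚ_[p])‖ ≤ 1 := Padic.norm_int_le_one _
  have h2 : ¬ ‖((k : ℤ) : ℚ_[p])‖ < 1 := by
    rw [Padic.norm_intCast_lt_one_iff]; exact h
  push_cast at h1 h2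
  linarith [lt_or_eq_of_le h1]

lemma faulhaber_sps (r N : ℕ) (hr : 1 ≤ r) :
    (Sps r N : ℚ) = ∑ i ∈ range (r + 1),
      bernoulli i * ((r + 1).choose i) * ((N : ℚ) + 1) ^ (r + 1 - i) / (r + 1) := by
  have key := _root_.sum_range_pow (N + 1) r
  have h0 : ∑ k ∈ range (N + 1), (k : ℚ) ^ r = ∑ t ∈ Finset.Icc 1 N, (t : ℚ) ^ r := by
    rw [range_eq_Ico, Finset.sum_eq_sum_Ico_succ_bot (Nat.succ_pos N)]
    rw [show Finset.Icc 1 N = Finset.Ico 1 (N + 1) by rw [Finset.Ico_add_one_right_eq_Icc]]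
    simp [zero_pow (by omega : r ≠ 0)]
  have h1 : (Sps r N : ℚ) = ∑ t ∈ Finset.Icc 1 N, (t : ℚ) ^ r := by
    unfold Sps; push_cast; rfl
  rw [h1, ← h0, key]
  push_cast
  exact Finset.sum_congr rfl fun i _ => by ring

lemma dvd_sps (p r : ℕ) [hp : Fact p.Prime] (hr : 1 ≤ r) (hr2 : r < p - 1) :
    (p : ℤ) ∣ Sps r (p - 1) := by
  rw [← ZMod.intCast_zmod_eq_zero_iff_dvd]
  have h1 : ((Sps r (p - 1) : ℤ) : ZMod p) = ∑ t ∈ Finset.Icc 1 (p - 1), (t : ZMod p) ^ r := by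
    unfold Sps; push_cast; rfl
  rw [h1]
  have hppos : 0 < p := hp.out.pos
  have h2 : ∑ t ∈ Finset.Icc 1 (p - 1), (t : ZMod p) ^ r
      = ∑ t ∈ range p, (t : ZMod p) ^ r := by
    rw [range_eq_Ico, Finset.sum_eq_sum_Ico_succ_bot hppos]
    rw [show Finset.Icc 1 (p - 1) = Finset.Ico 1 p by
      rw [← Finset.Ico_add_one_right_eq_Icc]; congr 1; omega]
    simp [zero_pow (by omega : r ≠ 0)]
  rw [h2]
  have h3 : ∑ t ∈ range p, (t : ZMod p) ^ r = ∑ x : ZMod p, x ^ r := by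
    refine Finset.sum_nbij' (fun t => (t : ZMod p)) (fun x => x.val) ?_ ?_ ?_ ?_ ?_
    · intro a _; exact Finset.mem_univ _
    · intro x _; exact Finset.mem_range.2 (ZMod.val_lt x)
    · intro a ha; exact ZMod.val_cast_of_lt (Finset.mem_range.1 ha)
    · intro x _; simp [ZMod.natCast_val, ZMod.cast_id]
    · intro a _; rfl
  rw [h3]
  have := FiniteField.sum_pow_lt_card_sub_one (K := ZMod p) r (by rw [ZMod.card]; omega)
  exact this

lemma zpow_neg2_eq (p : ℕ) [Fact p.Prime] : (p:ℝ) ^ (-(2:ℤ)) = ((p:ℝ)⁻¹) ^ 2 := by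
  rw [zpow_neg, ← inv_zpow, show ((2:ℤ)) = ((2:ℕ):ℤ) from rfl, zpow_natCast]

lemma sps_sub_eq (p : ℕ) [hp : Fact p.Prime] {r : ℕ} (hr : 1 ≤ r) :
    ((Sps r (p - 1) : ℤ) : ℚ_[p]) - (p : ℚ_[p]) * ((bernoulli r : ℚ) : ℚ_[p]) =
    ∑ i ∈ Finset.range r, ((bernoulli i : ℚ) : ℚ_[p]) * (((r + 1).choose i : ℕ) : ℚ_[p]) *
      (p : ℚ_[p]) ^ (r + 1 - i) / ((r : ℚ_[p]) + 1) := by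
  have hppos : 1 ≤ p := hp.out.pos
  have hQ : (Sps r (p - 1) : ℚ) - (p : ℚ) * bernoulli r =
      ∑ i ∈ range r, bernoulli i * (((r + 1).choose i : ℕ) : ℚ) * (p : ℚ) ^ (r + 1 - i) / ((r : ℚ) + 1) := by
    have hcast : ((p - 1 : ℕ) : ℚ) + 1 = (p : ℚ) := by
      rw [Nat.cast_sub hppos]; ring
    rw [faulhaber_sps r (p - 1) hr, hcast, Finset.sum_range_succ]
    have hlast : bernoulli r * (((r + 1).choose r : ℕ) : ℚ) * (p : ℚ) ^ (r + 1 - r) / ((r : ℚ) + 1)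
        = (p : ℚ) * bernoulli r := by
      rw [Nat.choose_succ_self_right, Nat.add_sub_cancel_left, pow_one]
      have : ((r : ℚ) + 1) ≠ 0 := by positivity
      field_simp
      push_cast; ring
    rw [hlast]
    ring
  have := congrArg (fun q : ℚ => (q : ℚ_[p])) hQ
  push_cast at this ⊢
  convert this using 2 <;> push_cast <;> ring

lemma norm_term_le (p : ℕ) [hp : Fact p.Prime] {i r : ℕ}
    (hB : ‖((bernoulli i : ℚ) : ℚ_[p])‖ ≤ 1) (hir : i < r) (hrp : r + 1 < p) :
    ‖((bernoulli i : ℚ) : ℚ_[p]) * (((r + 1).choose i : ℕ) : ℚ_[p]) *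
      (p : ℚ_[p]) ^ (r + 1 - i) / ((r : ℚ_[p]) + 1)‖ ≤ (p : ℝ) ^ (-(2:ℤ)) := by
  have hp1 : (1:ℝ) < (p:ℝ) := by exact_mod_cast hp.out.one_lt
  have hd : ‖((r : ℚ_[p]) + 1)‖ = 1 := by
    have : ((r : ℚ_[p]) + 1) = ((r + 1 : ℕ) : ℚ_[p]) := by push_cast; ring
    rw [this]
    apply norm_nat_eq_one
    intro hdvd
    have : (p:ℤ) ≤ (r+1 : ℤ) := Int.le_of_dvd (by positivity) hdvd
    omega
  have hc : ‖(((r + 1).choose i : ℕ) : ℚ_[p])‖ ≤ 1 := by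
    have := Padic.norm_int_le_one (p := p) ((r + 1).choose i)
    push_cast at this ⊢
    exact this
  have hpow : ‖(p : ℚ_[p]) ^ (r + 1 - i)‖ ≤ ((p:ℝ)⁻¹) ^ 2 := by
    rw [norm_pow, Padic.norm_p]
    apply pow_le_pow_of_le_one (by positivity) (by rw [inv_le_one_iff₀]; right; linarith)
    omega
  rw [norm_div, norm_mul, norm_mul, hd, div_one, zpow_neg2_eq]
  calc ‖((bernoulli i : ℚ) : ℚ_[p])‖ * ‖(((r + 1).choose i : ℕ) : ℚ_[p])‖ * ‖(p : ℚ_[p]) ^ (r + 1 - i)‖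
      ≤ 1 * 1 * ((p:ℝ)⁻¹) ^ 2 := by
        apply mul_le_mul (mul_le_mul hB hc (norm_nonneg _) (by norm_num)) hpow (norm_nonneg _) (by norm_num)
    _ = ((p:ℝ)⁻¹) ^ 2 := by ring

lemma sps_norm_le (p r : ℕ) [hp : Fact p.Prime] (hr : 1 ≤ r) (hr2 : r < p - 1) :
    ‖((Sps r (p - 1) : ℤ) : ℚ_[p])‖ ≤ (p : ℝ) ^ (-(1:ℤ)) := by
  have := (Padic.norm_int_le_pow_iff_dvd (p := p) (Sps r (p - 1)) 1).2
    (by simpa using dvd_sps p r hr hr2)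
  simpa using this

lemma bernoulli_padic_norm_le (p : ℕ) [hp : Fact p.Prime] (hp5 : 5 ≤ p) :
    ∀ r, r ≤ p - 3 → ‖((bernoulli r : ℚ) : ℚ_[p])‖ ≤ 1 := by
  intro r
  induction r using Nat.strong_induction_on with
  | _ r IH =>
    intro hr
    rcases Nat.eq_zero_or_pos r with rfl | hr1
    · simp
    have hp1 : (1:ℝ) < (p:ℝ) := by exact_mod_cast hp.out.one_lt
    have hsub := sps_sub_eq p (r := r) hr1
    have hsum : ‖((Sps r (p - 1) : ℤ) : ℚ_[p]) - (p : ℚ_[p]) * ((bernoulli r : ℚ) : ℚ_[p])‖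
        ≤ (p : ℝ) ^ (-(2:ℤ)) := by
      rw [hsub]
      apply IsUltrametricDist.norm_sum_le_of_forall_le_of_nonneg (by positivity)
      intro i hi
      have hi' := Finset.mem_range.1 hi
      exact norm_term_le p (IH i hi' (by omega)) hi' (by omega)
    have hS := sps_norm_le p r hr1 (by omega)
    have hpB : ‖(p : ℚ_[p]) * ((bernoulli r : ℚ) : ℚ_[p])‖ ≤ (p : ℝ) ^ (-(1:ℤ)) := by
      have heq : (p : ℚ_[p]) * ((bernoulli r : ℚ) : ℚ_[p]) =
          ((Sps r (p - 1) : ℤ) : ℚ_[p]) -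
          (((Sps r (p - 1) : ℤ) : ℚ_[p]) - (p : ℚ_[p]) * ((bernoulli r : ℚ) : ℚ_[p])) := by ring
      rw [heq, sub_eq_add_neg]
      apply le_trans (Padic.nonarchimedean _ _)
      rw [norm_neg]
      apply max_le hS (le_trans hsum (zpow_le_zpow_right₀ (le_of_lt hp1) (by norm_num)))
    rw [norm_mul, Padic.norm_p] at hpB
    have hpinv : (p:ℝ)⁻¹ > 0 := by positivity
    have : (p : ℝ) ^ (-(1:ℤ)) = (p:ℝ)⁻¹ := by simp
    rw [this] at hpB
    exact le_of_mul_le_mul_left (by simpa [mul_one] using hpB) hpinv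

lemma sps_sub_norm (p : ℕ) [Fact p.Prime] (hp5 : 5 ≤ p) {r : ℕ} (hr : 1 ≤ r) (hr3 : r ≤ p - 3) :
    ‖((Sps r (p - 1) : ℤ) : ℚ_[p]) - (p : ℚ_[p]) * ((bernoulli r : ℚ) : ℚ_[p])‖
      ≤ (p : ℝ) ^ (-(2:ℤ)) := by
  rw [sps_sub_eq p hr]
  apply IsUltrametricDist.norm_sum_le_of_forall_le_of_nonneg (by positivity)
  intro i hi
  have hi' := Finset.mem_range.1 hi
  exact norm_term_le p (bernoulli_padic_norm_le p hp5 i (by omega)) hi' (by omega)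

def reH : GaussianInt →+ ℤ := { toFun := Zsqrtd.re, map_zero' := rfl, map_add' := fun _ _ => rfl }
def imH : GaussianInt →+ ℤ := { toFun := Zsqrtd.im, map_zero' := rfl, map_add' := fun _ _ => rfl }

lemma gg_eq (n p : ℕ) :
    Gg n p = ∑ k ∈ Finset.range (n + 1), (n.choose k : GaussianInt) *
      ((Sps k (p - 1) : ℤ) : GaussianInt) * ((Sps (n - k) (p - 1) : ℤ) : GaussianInt) *
        Ig ^ (n - k) := by
  unfold Gg Fg
  have hcast : ∀ m : ℕ, ((Sps m (p - 1) : ℤ) : GaussianInt)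
      = ∑ a ∈ Finset.Icc 1 (p - 1), (a : GaussianInt) ^ m := by
    intro m; unfold Sps; push_cast; rfl
  have hab : ∀ a b : ℕ, ((a : GaussianInt) + (b : GaussianInt) * Ig) ^ n =
      ∑ k ∈ Finset.range (n + 1),
        (a : GaussianInt) ^ k * (b : GaussianInt) ^ (n - k) * Ig ^ (n - k) * (n.choose k) := by
    intro a b
    rw [add_pow]
    exact Finset.sum_congr rfl fun k _ => by rw [mul_pow]; ring
  simp_rw [hab]
  refine (Finset.sum_congr rfl fun a _ => Finset.sum_comm).trans ?_
  rw [Finset.sum_comm]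
  refine Finset.sum_congr rfl fun k _ => ?_
  rw [hcast k, hcast (n - k)]
  simp_rw [Finset.mul_sum, Finset.sum_mul]
  rw [Finset.sum_comm]
  exact Finset.sum_congr rfl fun a _ => Finset.sum_congr rfl fun b _ => by ring

lemma gg_re (n p : ℕ) : (Gg n p).re = ∑ k ∈ Finset.range (n + 1),
    (n.choose k : ℤ) * Sps k (p - 1) * Sps (n - k) (p - 1) * (Ig ^ (n - k)).re := by
  have := congrArg reH (gg_eq n p)
  rw [map_sum] at this
  rw [show (Gg n p).re = reH (Gg n p) from rfl, this]
  refine Finset.sum_congr rfl fun k _ => ?_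
  show (_ * _ * _ * _ : GaussianInt).re = _
  simp [Zsqrtd.re_mul, Zsqrtd.im_mul]

lemma gg_im (n p : ℕ) : (Gg n p).im = ∑ k ∈ Finset.range (n + 1),
    (n.choose k : ℤ) * Sps k (p - 1) * Sps (n - k) (p - 1) * (Ig ^ (n - k)).im := by
  have := congrArg imH (gg_eq n p)
  rw [map_sum] at this
  rw [show (Gg n p).im = imH (Gg n p) from rfl, this]
  refine Finset.sum_congr rfl fun k _ => ?_
  show (_ * _ * _ * _ : GaussianInt).im = _
  simp [Zsqrtd.re_mul, Zsqrtd.im_mul]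

theorem stmt10 (p n : ℕ) [Fact p.Prime] (hodd : Odd p) (hn : Even n)
    (hn2 : 2 ≤ n) (hn3 : n ≤ p - 3) :
    (‖(((Gg n p).re : ℚ_[p]) -
        (p : ℚ_[p]) * ((p : ℚ_[p]) - 1) * ((bernoulli n : ℚ) : ℚ_[p]) * (1 + (-1 : ℚ_[p]) ^ (n / 2)))‖
        ≤ (p : ℝ) ^ (-(2 : ℤ)) ∧
      ‖(((Gg n p).im : ℚ_[p]))‖ ≤ (p : ℝ) ^ (-(2 : ℤ))) ∧
    (n % 4 = 2 →
      ‖(((Gg n p).re : ℚ_[p]))‖ ≤ (p : ℝ) ^ (-(2 : ℤ))) ∧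
    (n % 4 = 0 →
      ‖(((Gg n p).re : ℚ_[p]) -
        2 * (p : ℚ_[p]) * ((p : ℚ_[p]) - 1) * ((bernoulli n : ℚ) : ℚ_[p]))‖ ≤ (p : ℝ) ^ (-(2 : ℤ))) := by
  have hp := (Fact.out : p.Prime)
  have hp5 : 5 ≤ p := by
    rcases hodd with ⟨t, ht⟩
    have := hp.two_le
    omega
  have hp0 : (p:ℝ) ≠ 0 := by positivity
  have hp1 : (1:ℝ) < (p:ℝ) := by exact_mod_cast hp.one_lt
  set T : ℕ → ℚ_[p] := fun j => ((Sps j (p - 1) : ℤ) : ℚ_[p]) with hT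
  set B : ℚ_[p] := ((bernoulli n : ℚ) : ℚ_[p]) with hB
  set ε : ℚ_[p] := (-1 : ℚ_[p]) ^ (n / 2) with hε
  have hεnorm : ‖ε‖ = 1 := by rw [hε, norm_pow, norm_neg, norm_one, one_pow]
  have h1ε : ‖1 + ε‖ ≤ 1 := by
    apply le_trans (Padic.nonarchimedean _ _)
    simp [hεnorm]
  have hT0 : T 0 = (p : ℚ_[p]) - 1 := by
    have : Sps 0 (p - 1) = ((p - 1 : ℕ) : ℤ) := by unfold Sps; simp
    rw [hT]
    simp only [this]
    push_cast [Nat.cast_sub hp.one_lt.le]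
    ring
  have hTnorm : ∀ j, 1 ≤ j → j ≤ p - 3 → ‖T j‖ ≤ (p:ℝ) ^ (-(1:ℤ)) := fun j h1 h2 =>
    sps_norm_le p j h1 (by omega)
  -- Ig^n
  have hIgn : Ig ^ n = (((-1 : ℤ) ^ (n / 2) : ℤ) : GaussianInt) := by
    obtain ⟨c, hc⟩ := hn
    have : n = 2 * (n / 2) := by omega
    rw [this, Ig_pow_even, ← this]
  have hIgn_re : ((Ig ^ n).re : ℚ_[p]) = ε := by
    rw [hIgn, Zsqrtd.re_intCast]; push_cast [hε]; ring
  have hIgn_im : (Ig ^ n).im = 0 := by rw [hIgn, Zsqrtd.im_intCast]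
  -- middle term bound
  have hmid : ∀ k, 1 ≤ k → k + 1 ≤ n → ∀ w : ℤ,
      ‖(n.choose k : ℚ_[p]) * T k * T (n - k) * ((w : ℤ) : ℚ_[p])‖ ≤ (p:ℝ) ^ (-(2:ℤ)) := by
    intro k hk1 hk2 w
    have h1 : ‖(n.choose k : ℚ_[p])‖ ≤ 1 := by
      have := Padic.norm_int_le_one (p := p) (n.choose k)
      push_cast at this ⊢; exact this
    have h2 : ‖T k‖ ≤ (p:ℝ) ^ (-(1:ℤ)) := hTnorm k hk1 (by omega)
    have h3 : ‖T (n - k)‖ ≤ (p:ℝ) ^ (-(1:ℤ)) := hTnorm (n - k) (by omega) (by omega)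
    have h4 : ‖((w : ℤ) : ℚ_[p])‖ ≤ 1 := Padic.norm_int_le_one _
    rw [norm_mul, norm_mul, norm_mul]
    calc ‖(n.choose k : ℚ_[p])‖ * ‖T k‖ * ‖T (n - k)‖ * ‖((w : ℤ) : ℚ_[p])‖
        ≤ 1 * (p:ℝ) ^ (-(1:ℤ)) * ((p:ℝ) ^ (-(1:ℤ))) * 1 := by
          gcongr <;> positivity
      _ = (p:ℝ) ^ (-(2:ℤ)) := by
          rw [one_mul, mul_one, ← zpow_add₀ hp0]; norm_num
  -- re expansion
  have hre : ((Gg n p).re : ℚ_[p]) = ∑ k ∈ Finset.range (n + 1),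
      (n.choose k : ℚ_[p]) * T k * T (n - k) * (((Ig ^ (n - k)).re : ℤ) : ℚ_[p]) := by
    rw [show ((Gg n p).re : ℚ_[p]) = (((Gg n p).re : ℤ) : ℚ_[p]) from rfl, gg_re n p]
    push_cast
    rfl
  have him : ((Gg n p).im : ℚ_[p]) = ∑ k ∈ Finset.range (n + 1),
      (n.choose k : ℚ_[p]) * T k * T (n - k) * (((Ig ^ (n - k)).im : ℤ) : ℚ_[p]) := by
    rw [show ((Gg n p).im : ℚ_[p]) = (((Gg n p).im : ℤ) : ℚ_[p]) from rfl, gg_im n p]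
    push_cast
    rfl
  obtain ⟨m, rfl⟩ : ∃ m, n = m + 2 := ⟨n - 2, by omega⟩
  set n := m + 2 with hndef
  have hE : ‖T n - (p : ℚ_[p]) * B‖ ≤ (p:ℝ) ^ (-(2:ℤ)) :=
    sps_sub_norm p hp5 (by omega) hn3
  -- main re estimate
  have main_re : ‖((Gg n p).re : ℚ_[p]) - (p : ℚ_[p]) * ((p : ℚ_[p]) - 1) * B * (1 + ε)‖
      ≤ (p:ℝ) ^ (-(2:ℤ)) := by
    have hsplit : ((Gg n p).re : ℚ_[p]) - (p : ℚ_[p]) * ((p : ℚ_[p]) - 1) * B * (1 + ε) =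
        (∑ i ∈ Finset.range (m + 1),
          (n.choose (i+1) : ℚ_[p]) * T (i+1) * T (n - (i+1)) * (((Ig ^ (n - (i+1))).re : ℤ) : ℚ_[p]))
        + (((p : ℚ_[p]) - 1) * (1 + ε)) * (T n - (p : ℚ_[p]) * B) := by
      rw [hre, Finset.sum_range_succ, Finset.sum_range_succ']
      have e0 : (n.choose 0 : ℚ_[p]) * T 0 * T (n - 0) * (((Ig ^ (n - 0)).re : ℤ) : ℚ_[p])
          = ((p : ℚ_[p]) - 1) * T n * ε := by
        rw [Nat.choose_zero_right, Nat.sub_zero, hIgn_re, hT0]; push_cast; ring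
      have en : (n.choose n : ℚ_[p]) * T n * T (n - n) * (((Ig ^ (n - n)).re : ℤ) : ℚ_[p])
          = T n * ((p : ℚ_[p]) - 1) := by
        rw [Nat.choose_self, Nat.sub_self, pow_zero, hT0]
        norm_num [Zsqrtd.re_one]
      rw [e0, en]
      ring
    rw [hsplit, add_comm]
    apply le_trans (Padic.nonarchimedean _ _)
    apply max_le
    · calc ‖(((p : ℚ_[p]) - 1) * (1 + ε)) * (T n - (p : ℚ_[p]) * B)‖
          = ‖(p : ℚ_[p]) - 1‖ * ‖1 + ε‖ * ‖T n - (p : ℚ_[p]) * B‖ := by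
            rw [norm_mul, norm_mul]
        _ ≤ 1 * 1 * ((p:ℝ) ^ (-(2:ℤ))) := by
            have hpm1 : ‖(p : ℚ_[p]) - 1‖ ≤ 1 := by
              have : ((p : ℚ_[p]) - 1) = (((p : ℤ) - 1 : ℤ) : ℚ_[p]) := by push_cast; ring
              rw [this]; exact Padic.norm_int_le_one _
            gcongr <;> positivity
        _ = (p:ℝ) ^ (-(2:ℤ)) := by ring
    · apply IsUltrametricDist.norm_sum_le_of_forall_le_of_nonneg (by positivity)
      intro i hi
      have hi' := Finset.mem_range.1 hi
      exact hmid (i + 1) (by omega) (by omega) _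
  refine ⟨⟨main_re, ?_⟩, ?_, ?_⟩
  · -- imaginary part
    rw [him]
    apply IsUltrametricDist.norm_sum_le_of_forall_le_of_nonneg (by positivity)
    intro k hk
    have hk' := Finset.mem_range.1 hk
    rcases Nat.eq_zero_or_pos k with rfl | hk1
    · rw [Nat.sub_zero, hIgn_im]
      simp
    rcases eq_or_ne k n with rfl | hkn
    · rw [Nat.sub_self, pow_zero]
      simp [Zsqrtd.im_one]
    · exact hmid k hk1 (by omega) _
  · -- n % 4 = 2
    intro h4
    have hεm : ε = -1 := by
      rw [hε]
      apply Odd.neg_one_pow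
      exact Nat.odd_iff.2 (by omega)
    have h0 : (p : ℚ_[p]) * ((p : ℚ_[p]) - 1) * B * (1 + ε) = 0 := by rw [hεm]; ring
    have hmr := main_re
    rw [h0, sub_zero] at hmr
    exact hmr
  · intro h4
    have hε1 : ε = 1 := by
      rw [hε]
      apply Even.neg_one_pow
      exact Nat.even_iff.2 (by omega)
    have h2 : (p : ℚ_[p]) * ((p : ℚ_[p]) - 1) * B * (1 + ε)
        = 2 * (p : ℚ_[p]) * ((p : ℚ_[p]) - 1) * B := by rw [hε1]; ring
    rw [← h2]
    exact main_re
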